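/- If τ : L → L is an injective, continuous, open group homomorphism of a topological group L, and L has only finitely many connected components, then τ is surjective (hence a bijective group homomorphism). -/

import Mathlib

/-- If τ : L → L is an injective, continuous, open group homomorphism of a
topological group L with finitely many connected components, then τ is
surjective, hence bijective. -/
theorem near_automorphism_of_finitely_many_components_is_automorphism
    {L : Type*} [TopologicalSpace L] [Group L] [IsTopologicalGroup L] [T2Space L]
    [Finite (ConnectedComponents L)]
    (τ : L →* L) (hcont : Continuous τ) (hinj : Function.Injective τ)
    (hopen : IsOpenMap τ) :
    Function.Surjective τ ∧ Function.Bijective τ := by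
  have hro : IsOpen (Set.range τ) := hopen.isOpen_range
  have hrange : IsClopen (Set.range τ) := by
    refine ⟨?_, hro⟩
    have := τ.range.isClosed_of_isOpen (by simpa using hro)
    simpa using this
  have hcinj : Function.Injective hcont.connectedComponentsMap := by
    intro a b
    obtain ⟨x, rfl⟩ := ConnectedComponents.surjective_coe a
    obtain ⟨y, rfl⟩ := ConnectedComponents.surjective_coe b
    simp only [Continuous.connectedComponentsMap, Continuous.connectedComponentsLift_apply_coe, Function.comp_apply]
    intro h
    rw [ConnectedComponents.coe_eq_coe'] at h ⊢
    have hsub : connectedComponent (τ y) ⊆ Set.range τ :=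
      hrange.connectedComponent_subset ⟨y, rfl⟩
    have hpre : IsPreconnected (τ ⁻¹' connectedComponent (τ y)) :=
      isPreconnected_connectedComponent.preimage_of_isOpenMap hinj hopen hsub
    exact hpre.subset_connectedComponent (Set.mem_preimage.mpr mem_connectedComponent)
      (Set.mem_preimage.mpr h)
  have key : Function.Surjective hcont.connectedComponentsMap :=
    Finite.injective_iff_surjective.mp hcinj
  have hsurj : Function.Surjective τ := by
    intro y
    obtain ⟨a, ha⟩ := key (↑y)
    obtain ⟨x, rfl⟩ := ConnectedComponents.surjective_coe a
    rw [Continuous.connectedComponentsMap, Continuous.connectedComponentsLift_apply_coe, Function.comp_apply,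
      ConnectedComponents.coe_eq_coe'] at ha
    have hsub : connectedComponent (τ x) ⊆ Set.range τ :=
      hrange.connectedComponent_subset ⟨x, rfl⟩
    have hy : y ∈ connectedComponent (τ x) := by
      rw [← connectedComponent_eq ha]; exact mem_connectedComponent
    exact hsub hy
  exact ⟨hsurj, hinj, hsurj⟩
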